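/- Let (μ_k)_{k≥0} and (ν_k)_{k≥0} be sequences of positive reals with ∑_{k=0}^∞ ν_k < ∞. Set φ_i = ∑_{k=i}^∞ ν_k and X_k = ∑_{j=0}^k μ_j, and assume X_k φ_k ≤ δ for all k ≥ 0, for some constant δ < ∞. Then for every i ≥ 0, ∑_{k=0}^∞ μ_k φ_{max(k,i)}² ≤ 2δ φ_i. -/

import Mathlib

lemma stmt_3_aux (μ φ ν : ℕ → ℝ) (hμ : ∀ k, 0 < μ k) (hν : ∀ k, 0 < ν k)
    (hφpos : ∀ n, 0 < φ n) (hrec : ∀ n, φ n = ν n + φ (n + 1)) (δ : ℝ)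
    (hδ : ∀ k, (∑ j ∈ Finset.range (k + 1), μ j) * φ k ≤ δ) (i : ℕ) :
    Summable (fun k : ℕ => μ k * φ (max k i) ^ 2) ∧
      (∑' k : ℕ, μ k * φ (max k i) ^ 2) ≤ 2 * δ * φ i := by
  have hδ0 : 0 ≤ δ := by
    refine le_trans ?_ (hδ 0)
    rw [Finset.sum_range_one]
    exact (mul_pos (hμ 0) (hφpos 0)).le
  have hanti : ∀ m n : ℕ, m ≤ n → φ n ≤ φ m := by
    intro m n h
    exact antitone_nat_of_succ_le (fun k => by have := hrec k; have := hν k; linarith) h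
  have hXnonneg : ∀ n : ℕ, 0 ≤ ∑ j ∈ Finset.range n, μ j :=
    fun n => Finset.sum_nonneg fun j _ => (hμ j).le
  have hXmono : ∀ m n : ℕ, m ≤ n →
      (∑ j ∈ Finset.range m, μ j) ≤ ∑ j ∈ Finset.range n, μ j := by
    intro m n h
    exact Finset.sum_le_sum_of_subset_of_nonneg (Finset.range_subset_range.2 h)
      (fun j _ _ => (hμ j).le)
  -- the invariant
  have key : ∀ n : ℕ, ∑ k ∈ Finset.range n, μ k * φ (max k i) ^ 2 ≤
      2 * δ * (φ i - φ (max n i)) + (∑ j ∈ Finset.range n, μ j) * φ (max n i) ^ 2 := by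
    intro n
    induction n with
    | zero => simp
    | succ n ih =>
      rw [Finset.sum_range_succ, Finset.sum_range_succ (f := μ)]
      have step : (∑ j ∈ Finset.range (n + 1), μ j) *
          (φ (max n i) ^ 2 - φ (max (n + 1) i) ^ 2) ≤
          2 * δ * (φ (max n i) - φ (max (n + 1) i)) := by
        rcases lt_or_ge n i with h | h
        · have h1 : max n i = i := max_eq_right h.le
          have h2 : max (n + 1) i = i := max_eq_right h
          rw [h1, h2]
          simp
        · have h1 : max n i = n := max_eq_left h
          have h2 : max (n + 1) i = n + 1 := max_eq_left (h.trans n.le_succ)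
          rw [h1, h2]
          have hXφ := hδ n
          have hrecn := hrec n
          have hνn := hν n
          have hX := hXnonneg (n + 1)
          have hprod : (∑ j ∈ Finset.range (n + 1), μ j) * φ n * ν n ≤ δ * ν n :=
            mul_le_mul_of_nonneg_right hXφ hνn.le
          have hsub : φ (n + 1) = φ n - ν n := by linarith
          rw [hsub]
          nlinarith [mul_nonneg hX (mul_self_nonneg (ν n))]
      have hXn1 : (∑ j ∈ Finset.range n, μ j) + μ n = ∑ j ∈ Finset.range (n + 1), μ j :=
        (Finset.sum_range_succ μ n).symm
      nlinarith [step]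
  have bound : ∀ n : ℕ, ∑ k ∈ Finset.range n, μ k * φ (max k i) ^ 2 ≤ 2 * δ * φ i := by
    intro n
    have h1 := key n
    have h2 : (∑ j ∈ Finset.range n, μ j) * φ (max n i) ≤ δ := by
      refine le_trans ?_ (hδ (max n i))
      exact mul_le_mul_of_nonneg_right (hXmono n (max n i + 1)
        (le_trans (le_max_left n i) (Nat.le_succ _))) (hφpos _).le
    have h3 : 0 < φ (max n i) := hφpos _
    nlinarith [hXnonneg n]
  have hnn : ∀ k : ℕ, 0 ≤ μ k * φ (max k i) ^ 2 :=
    fun k => mul_nonneg (hμ k).le (sq_nonneg _)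
  exact ⟨summable_of_sum_range_le hnn bound, Real.tsum_le_of_sum_range_le hnn bound⟩

/-- Summation-by-parts estimate showing `δ₁′ ≤ 2δ`: if `φ i = ∑_{k=i}^∞ ν k`
and `X k * φ k ≤ δ` for all `k` (with `X k = ∑_{j=0}^k μ j`), then
`∑_{k=0}^∞ μ k * φ (max k i)² ≤ 2 δ φ i`; in particular the series converges. -/
theorem stmt_3 (μ ν : ℕ → ℝ) (hμ : ∀ k, 0 < μ k) (hν : ∀ k, 0 < ν k)
    (hsum : Summable ν) (δ : ℝ)
    (hδ : ∀ k, (∑ j ∈ Finset.range (k + 1), μ j) * (∑' mm : ℕ, ν (k + mm)) ≤ δ) :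
    ∀ i : ℕ,
      Summable (fun k : ℕ => μ k * (∑' mm : ℕ, ν (max k i + mm)) ^ 2) ∧
      (∑' k : ℕ, μ k * (∑' mm : ℕ, ν (max k i + mm)) ^ 2) ≤
        2 * δ * (∑' mm : ℕ, ν (i + mm)) := by
  intro i
  have hφsum : ∀ n : ℕ, Summable (fun mm : ℕ => ν (n + mm)) := by
    intro n
    exact hsum.comp_injective (fun a b h => by omega)
  have hφpos : ∀ n : ℕ, 0 < ∑' mm : ℕ, ν (n + mm) := by
    intro n
    exact Summable.tsum_pos (hφsum n) (fun m => (hν _).le) 0 (hν _)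
  have hrec : ∀ n : ℕ, (∑' mm : ℕ, ν (n + mm)) = ν n + ∑' mm : ℕ, ν (n + 1 + mm) := by
    intro n
    have h1 := Summable.tsum_eq_zero_add (hφsum n)
    have h2 : (fun mm : ℕ => ν (n + (mm + 1))) = fun mm : ℕ => ν (n + 1 + mm) := by
      funext mm; congr 1; omega
    rw [h2] at h1
    simpa using h1
  exact stmt_3_aux μ (fun n => ∑' mm : ℕ, ν (n + mm)) ν hμ hν hφpos hrec δ hδ i
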